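/- For any nested canalizing function f with k > 1 relevant variables, the zero Fourier coefficient satisfies 1/2^{k-1} ≤ |f̂(∅)| ≤ 1 - 1/2^{k-1}. -/

import Mathlib

open Finset

/-- Sign encoding of a Boolean value: `true ↦ 1`, `false ↦ -1`. -/
def bsign (a : Bool) : ℝ := if a then 1 else -1

/-- The character `χ_U(x) = ∏_{i ∈ U} x_i` (inputs encoded as Booleans). -/
def chi {n : ℕ} (U : Finset (Fin n)) (x : Fin n → Bool) : ℝ :=
  ∏ i ∈ U, bsign (x i)

/-- Fourier coefficient `f̂(U) = 2^{-n} ∑_x f(x) χ_U(x)`. -/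
noncomputable def fhat {n : ℕ} (f : (Fin n → Bool) → ℝ) (U : Finset (Fin n)) : ℝ :=
  (∑ x : Fin n → Bool, f x * chi U x) / 2 ^ n

/-- `f` is a (±1-valued) Boolean function. -/
def IsBoolean {n : ℕ} (f : (Fin n → Bool) → ℝ) : Prop := ∀ x, f x = 1 ∨ f x = -1

/-- Restriction `f^{(i,a)}` of `f` obtained by fixing the `i`-th input to `a`. -/
def restrict {n : ℕ} (f : (Fin n → Bool) → ℝ) (i : Fin n) (a : Bool) :
    (Fin n → Bool) → ℝ :=
  fun x => f (Function.update x i a)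

/-- Variable `i` is relevant for `f`. -/
def relevant {n : ℕ} (f : (Fin n → Bool) → ℝ) (i : Fin n) : Prop :=
  ∃ x, f x ≠ f (Function.update x i (!(x i)))

/-- Number of relevant variables of `f`. -/
noncomputable def numRel {n : ℕ} (f : (Fin n → Bool) → ℝ) : ℕ :=
  Nat.card {i : Fin n // relevant f i}

/-- Influence `I_i(f) = Pr[f(X) ≠ f(X ⊕ e_i)]` for uniform `X`. -/
noncomputable def influence {n : ℕ} (f : (Fin n → Bool) → ℝ) (i : Fin n) : ℝ :=
  (Nat.card {x : Fin n → Bool // f x ≠ f (Function.update x i (!(x i)))} : ℝ) / 2 ^ n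

/-- Average sensitivity `as(f) = ∑_i I_i(f)`. -/
noncomputable def avgSens {n : ℕ} (f : (Fin n → Bool) → ℝ) : ℝ :=
  ∑ i : Fin n, influence f i

/-- `IsNCFwith f L` : `f` is a nested canalizing function with the nested canalizing
structure recorded by the list `L` of triples `(π(j), α_j, β_j)`: fixing variable
`π(j)` to its canalizing value `α_j` forces the output `β_j`, and the restriction to
the non-canalizing value continues with the rest of the list; the base case is a
constant (±1) function. -/
inductive IsNCFwith : {n : ℕ} → ((Fin n → Bool) → ℝ) → List (Fin n × Bool × ℝ) → Prop where
  | const {n : ℕ} (f : (Fin n → Bool) → ℝ) (b : ℝ) (hb : b = 1 ∨ b = -1)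
      (h : ∀ x, f x = b) : IsNCFwith f []
  | step {n : ℕ} (f : (Fin n → Bool) → ℝ) (i : Fin n) (a : Bool) (b : ℝ)
      (hb : b = 1 ∨ b = -1) (L : List (Fin n × Bool × ℝ))
      (hrel : relevant f i)
      (hcan : ∀ x, x i = a → f x = b)
      (hrest : IsNCFwith (restrict f i (!a)) L) :
      IsNCFwith f ((i, a, b) :: L)

/-- `f` is a nested canalizing function. -/
def IsNCF {n : ℕ} (f : (Fin n → Bool) → ℝ) : Prop := ∃ L, IsNCFwith f L

/-- Variable `i` is most dominant: some nested canalizing ordering starts with `i`. -/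
def MostDominant {n : ℕ} (f : (Fin n → Bool) → ℝ) (i : Fin n) : Prop :=
  ∃ a b L, IsNCFwith f ((i, a, b) :: L)

/-- The canalized output values `β_1, β_2, …` recorded in `L` alternate in sign. -/
def AltBetas {n : ℕ} (L : List (Fin n × Bool × ℝ)) : Prop :=
  List.Chain' (fun p q : Fin n × Bool × ℝ => q.2.2 = -p.2.2) L


section AuxNCF

lemma aux_not_rel {n} (f : (Fin n → Bool) → ℝ) (i : Fin n) (a : Bool) :
    ¬ relevant (restrict f i a) i := by
  rintro ⟨x, hx⟩
  apply hx
  show f (Function.update x i a) = f (Function.update (Function.update x i (!(x i))) i a)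
  rw [Function.update_idem]

lemma aux_rel_of_restrict {n} {f : (Fin n → Bool) → ℝ} {i j : Fin n} {a : Bool}
    (hij : j ≠ i) (hj : relevant (restrict f i a) j) : relevant f j := by
  obtain ⟨x, hx⟩ := hj
  refine ⟨Function.update x i a, ?_⟩
  have hyj : (Function.update x i a) j = x j := Function.update_of_ne hij a x
  rw [hyj, Function.update_comm hij.symm]
  exact hx

lemma aux_restrict_of_rel {n} {f : (Fin n → Bool) → ℝ} {i j : Fin n} {a : Bool} {b : ℝ}
    (hij : j ≠ i) (hcan : ∀ x, x i = a → f x = b) (hj : relevant f j) :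
    relevant (restrict f i (!a)) j := by
  obtain ⟨x, hx⟩ := hj
  have hxi : x i ≠ a := by
    intro h
    apply hx
    rw [hcan x h, hcan _ (by rw [Function.update_of_ne hij.symm]; exact h)]
  have hxa : x i = !a := by cases a <;> cases h : x i <;> simp_all
  refine ⟨x, ?_⟩
  show f (Function.update x i (!a)) ≠ f (Function.update (Function.update x j (!(x j))) i (!a))
  have e1 : Function.update x i (!a) = x := by rw [← hxa]; exact Function.update_eq_self i x
  have hv : (Function.update x j (!(x j))) i = !a := by
    rw [Function.update_of_ne hij.symm]; exact hxa
  have e2 : Function.update (Function.update x j (!(x j))) i (!a)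
      = Function.update x j (!(x j)) := by
    rw [← hv]; exact Function.update_eq_self i _
  rw [e1, e2]; exact hx

lemma aux_numRel_const {n} (f : (Fin n → Bool) → ℝ) (b : ℝ) (hc : ∀ x, f x = b) :
    numRel f = 0 := by
  have : IsEmpty {i : Fin n // relevant f i} :=
    ⟨by rintro ⟨i, x, hx⟩; exact hx (by rw [hc, hc])⟩
  exact Nat.card_of_isEmpty

lemma aux_numRel_step {n} (f : (Fin n → Bool) → ℝ) (i : Fin n) (a : Bool) (b : ℝ)
    (hrel : relevant f i) (hcan : ∀ x, x i = a → f x = b) :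
    numRel f = numRel (restrict f i (!a)) + 1 := by
  set g := restrict f i (!a) with hg
  have key : ∀ j, relevant f j ↔ (j = i ∨ relevant g j) := by
    intro j
    constructor
    · intro hj
      by_cases hji : j = i
      · exact Or.inl hji
      · exact Or.inr (aux_restrict_of_rel hji hcan hj)
    · rintro (rfl | hj)
      · exact hrel
      · have hji : j ≠ i := by
          rintro rfl
          exact aux_not_rel f j (!a) hj
        exact aux_rel_of_restrict hji hj
  have hgi : ¬ relevant g i := aux_not_rel f i (!a)
  have hset : {j : Fin n | relevant f j} = insert i {j : Fin n | relevant g j} := by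
    ext j; simp only [Set.mem_insert_iff, Set.mem_setOf_eq]; exact key j
  show Nat.card {j : Fin n | relevant f j} = Nat.card {j : Fin n | relevant g j} + 1
  have hmem : i ∉ {j : Fin n | relevant g j} := hgi
  rw [Nat.card_coe_set_eq, Nat.card_coe_set_eq, hset,
    Set.ncard_insert_of_notMem hmem (Set.toFinite _)]

lemma aux_sum_split {n} (f : (Fin n → Bool) → ℝ) (i : Fin n) (a : Bool) :
    2 * ∑ x : Fin n → Bool, f x
      = (∑ x : Fin n → Bool, f (Function.update x i a))
        + ∑ x : Fin n → Bool, f (Function.update x i (!a)) := by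
  have hinv : Function.Involutive (fun x : Fin n → Bool => Function.update x i (!(x i))) := by
    intro x
    simp only [Function.update_self, Function.update_idem, Bool.not_not,
      Function.update_eq_self]
  have h1 : ∑ x : Fin n → Bool, f (Function.update x i (!(x i)))
      = ∑ x : Fin n → Bool, f x := hinv.bijective.sum_comp f
  rw [two_mul]
  nth_rewrite 2 [← h1]
  rw [← Finset.sum_add_distrib, ← Finset.sum_add_distrib]
  apply Finset.sum_congr rfl
  intro x _
  by_cases h : x i = a
  · have h2 : Function.update x i a = x := by rw [← h]; exact Function.update_eq_self i x
    rw [h2, h]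
  · have hxa : x i = !a := by cases a <;> cases hx : x i <;> simp_all
    have h2 : Function.update x i (!a) = x := by rw [← hxa]; exact Function.update_eq_self i x
    rw [h2, hxa, Bool.not_not]
    ring

lemma aux_fhat_empty {n} (f : (Fin n → Bool) → ℝ) :
    fhat f ∅ = (∑ x : Fin n → Bool, f x) / 2 ^ n := by
  simp [fhat, chi]

lemma aux_card_fun (n : ℕ) : (Finset.univ : Finset (Fin n → Bool)).card = 2 ^ n := by
  simp [Finset.card_univ]

lemma aux_fhat_const {n} (f : (Fin n → Bool) → ℝ) (b : ℝ) (hc : ∀ x, f x = b) :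
    fhat f ∅ = b := by
  rw [aux_fhat_empty]
  rw [Finset.sum_congr rfl (fun x _ => hc x), Finset.sum_const, aux_card_fun]
  have h2n : (0:ℝ) < 2 ^ n := by positivity
  field_simp
  simp [nsmul_eq_mul]

lemma aux_fhat_step {n} (f : (Fin n → Bool) → ℝ) (i : Fin n) (a : Bool) (b : ℝ)
    (hcan : ∀ x, x i = a → f x = b) :
    fhat f ∅ = (b + fhat (restrict f i (!a)) ∅) / 2 := by
  have hsplit := aux_sum_split f i a
  have hba : ∑ x : Fin n → Bool, f (Function.update x i a) = 2 ^ n * b := by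
    rw [Finset.sum_congr rfl (fun x _ => hcan _ (Function.update_self i a x)),
      Finset.sum_const, aux_card_fun]
    simp [mul_comm]
  have hg : ∑ x : Fin n → Bool, f (Function.update x i (!a))
      = ∑ x : Fin n → Bool, restrict f i (!a) x := rfl
  rw [aux_fhat_empty, aux_fhat_empty]
  have h2n : (0:ℝ) < 2 ^ n := by positivity
  rw [hba, hg] at hsplit
  field_simp
  linear_combination hsplit

lemma aux_const_of_zero {n} {f : (Fin n → Bool) → ℝ} {L} (h : IsNCFwith f L)
    (h0 : numRel f = 0) : ∃ b, (b = 1 ∨ b = -1) ∧ ∀ x, f x = b := by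
  cases h with
  | const _ b hb hc => exact ⟨b, hb, hc⟩
  | step _ i a b hb L hrel hcan hrest =>
    exfalso
    have : 0 < numRel f := by
      haveI : Nonempty {j : Fin n // relevant f j} := ⟨⟨i, hrel⟩⟩
      exact Nat.card_pos
    omega

lemma aux_upper : ∀ {n} {f : (Fin n → Bool) → ℝ} {L}, IsNCFwith f L →
    1 ≤ numRel f → |fhat f ∅| ≤ 1 - 1 / 2 ^ (numRel f - 1) := by
  intro n f L h
  induction h with
  | const f b hb hc =>
    intro h1
    have := aux_numRel_const f b hc
    omega
  | step f i a b hb L hrel hcan hrest ih =>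
    intro _
    have hstep := aux_numRel_step f i a b hrel hcan
    set g := restrict f i (!a) with hgdef
    have hfhat := aux_fhat_step f i a b hcan
    rcases Nat.eq_zero_or_pos (numRel g) with h0 | hpos
    · obtain ⟨b', hb', hgc⟩ := aux_const_of_zero hrest h0
      have hb'b : b' = -b := by
        by_contra hne
        have hbb : b' = b := by
          rcases hb with rfl | rfl <;> rcases hb' with rfl | rfl <;> simp_all
        have hcf : ∀ x, f x = b := by
          intro x
          by_cases hx : x i = a
          · exact hcan x hx
          · have hxa : x i = !a := by cases a <;> cases hxx : x i <;> simp_all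
            have hgx : g x = f x := by
              show f (Function.update x i (!a)) = f x
              rw [← hxa, Function.update_eq_self]
            rw [← hgx, hgc x, hbb]
        obtain ⟨x, hx⟩ := hrel
        exact hx (by rw [hcf, hcf])
      have hz : fhat f ∅ = 0 := by
        rw [hfhat, aux_fhat_const g b' hgc, hb'b]; ring
      rw [hz, hstep, h0]
      norm_num
    · have hih := ih hpos
      have habs : |b| = 1 := by rcases hb with rfl | rfl <;> norm_num
      have h1 : |fhat f ∅| ≤ (|b| + |fhat g ∅|) / 2 := by
        rw [hfhat]
        calc |(b + fhat g ∅) / 2| = |b + fhat g ∅| / 2 := by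
              rw [abs_div]; norm_num
          _ ≤ (|b| + |fhat g ∅|) / 2 := by
              have := abs_add_le b (fhat g ∅); linarith
      rw [hstep]
      have hpow : (2:ℝ) ^ (numRel g + 1 - 1) = 2 * 2 ^ (numRel g - 1) := by
        have hm : numRel g + 1 - 1 = (numRel g - 1) + 1 := by omega
        rw [hm, pow_succ]; ring
      rw [hpow]
      have hp : (0:ℝ) < 2 ^ (numRel g - 1) := by positivity
      rw [habs] at h1
      have e : (1:ℝ) / (2 * 2 ^ (numRel g - 1)) = (1 / 2 ^ (numRel g - 1)) / 2 := by
        rw [div_div, mul_comm]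
      linarith

end AuxNCF

/-- Bounds on the zero coefficient of an NCF with `k > 1` relevant variables. -/
theorem fhat_empty_ncf_bounds {n : ℕ} (f : (Fin n → Bool) → ℝ)
    (hf : IsNCF f) (k : ℕ) (hk : numRel f = k) (h1 : 1 < k) :
    1 / 2 ^ (k - 1) ≤ |fhat f ∅| ∧ |fhat f ∅| ≤ 1 - 1 / 2 ^ (k - 1) := by
  obtain ⟨L, h⟩ := hf
  have hupper := aux_upper h (by omega)
  rw [hk] at hupper
  refine ⟨?_, hupper⟩
  cases h with
  | const _ b hb hc =>
    have := aux_numRel_const f b hc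
    omega
  | step _ i a b hb L hrel hcan hrest =>
    set g := restrict f i (!a) with hgdef
    have hstep := aux_numRel_step f i a b hrel hcan
    rw [← hgdef] at hstep
    have hg1 : 1 ≤ numRel g := by omega
    have hgu := aux_upper hrest hg1
    have hgk : numRel g = k - 1 := by omega
    rw [hgk] at hgu
    have e2 : k - 1 - 1 = k - 2 := by omega
    rw [e2] at hgu
    have hfhat := aux_fhat_step f i a b hcan
    have habs : |b| = 1 := by rcases hb with rfl | rfl <;> norm_num
    have h1 : (|b| - |fhat g ∅|) / 2 ≤ |fhat f ∅| := by
      rw [hfhat]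
      have h3 : |b| ≤ |b + fhat g ∅| + |fhat g ∅| := by
        calc |b| = |(b + fhat g ∅) + (-(fhat g ∅))| := by ring_nf
          _ ≤ |b + fhat g ∅| + |(-(fhat g ∅))| := abs_add_le _ _
          _ = |b + fhat g ∅| + |fhat g ∅| := by rw [abs_neg]
      have h4 : |(b + fhat g ∅) / 2| = |b + fhat g ∅| / 2 := by
        rw [abs_div]; norm_num
      rw [h4]
      linarith
    rw [habs] at h1
    have hpow : (2:ℝ) ^ (k - 1) = 2 * 2 ^ (k - 2) := by
      have hk12 : k - 1 = (k - 2) + 1 := by omega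
      rw [hk12, pow_succ]; ring
    rw [hpow]
    have hp : (0:ℝ) < 2 ^ (k - 2) := by positivity
    have e : (1:ℝ) / (2 * 2 ^ (k - 2)) = (1 / 2 ^ (k - 2)) / 2 := by
      rw [div_div, mul_comm]
    linarith
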